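/- Let θ₁, θ₂, θ₃ be a basis of the self-dual 2-forms on an oriented 4-dimensional real inner product space, and let A₁, A₂, A₃ be vectors such that ι_{A_i}θ_j = ι_{A_j}θ_i for all i, j. Then A₁ = A₂ = A₃ = 0. -/
import Mathlib

noncomputable def stdBasis4 (i : Fin 4) : Fin 4 → ℝ := Pi.single i 1

/-- Self-duality `*ω = ω` of a 2-form on oriented Euclidean ℝ⁴, expressed in the
standard orthonormal oriented basis. -/
def IsSelfDual (ω : (Fin 4 → ℝ) [⋀^Fin 2]→ₗ[ℝ] ℝ) : Prop :=
  ω ![stdBasis4 0, stdBasis4 1] = ω ![stdBasis4 2, stdBasis4 3] ∧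
  ω ![stdBasis4 0, stdBasis4 2] = ω ![stdBasis4 3, stdBasis4 1] ∧
  ω ![stdBasis4 0, stdBasis4 3] = ω ![stdBasis4 1, stdBasis4 2]

lemma expandL (θ : (Fin 4 → ℝ) [⋀^Fin 2]→ₗ[ℝ] ℝ) (v w : Fin 4 → ℝ) :
    θ ![v, w] = ∑ m : Fin 4, v m * θ ![stdBasis4 m, w] := by
  have hupd : ∀ x : Fin 4 → ℝ, Function.update ![v, w] 0 x = ![x, w] := by
    intro x; funext i; fin_cases i <;> rfl
  have hv : v = ∑ m : Fin 4, v m • stdBasis4 m := by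
    funext j
    simp [stdBasis4, Finset.sum_apply, Pi.single_apply]
  let L := θ.toMultilinearMap.toLinearMap ![v, w] 0
  have hL : ∀ x, L x = θ ![x, w] := by
    intro x
    simp [L, MultilinearMap.toLinearMap, hupd]
  calc θ ![v, w] = L v := (hL v).symm
    _ = L (∑ m : Fin 4, v m • stdBasis4 m) := by rw [← hv]
    _ = ∑ m : Fin 4, v m • L (stdBasis4 m) := by rw [map_sum]; simp
    _ = ∑ m : Fin 4, v m * θ ![stdBasis4 m, w] := by simp [hL, smul_eq_mul]

lemma expandR (θ : (Fin 4 → ℝ) [⋀^Fin 2]→ₗ[ℝ] ℝ) (u w : Fin 4 → ℝ) :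
    θ ![u, w] = ∑ l : Fin 4, w l * θ ![u, stdBasis4 l] := by
  have hupd : ∀ x : Fin 4 → ℝ, Function.update ![u, w] 1 x = ![u, x] := by
    intro x; funext i; fin_cases i <;> rfl
  have hw : w = ∑ l : Fin 4, w l • stdBasis4 l := by
    funext j
    simp [stdBasis4, Finset.sum_apply, Pi.single_apply]
  let L := θ.toMultilinearMap.toLinearMap ![u, w] 1
  have hL : ∀ x, L x = θ ![u, x] := by
    intro x
    simp [L, MultilinearMap.toLinearMap, hupd]
  calc θ ![u, w] = L w := (hL w).symm
    _ = L (∑ l : Fin 4, w l • stdBasis4 l) := by rw [← hw]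
    _ = ∑ l : Fin 4, w l • L (stdBasis4 l) := by rw [map_sum]; simp
    _ = ∑ l : Fin 4, w l * θ ![u, stdBasis4 l] := by simp [hL, smul_eq_mul]

lemma expand2 (θ : (Fin 4 → ℝ) [⋀^Fin 2]→ₗ[ℝ] ℝ) (v w : Fin 4 → ℝ) :
    θ ![v, w] = ∑ m : Fin 4, ∑ l : Fin 4, v m * (w l * θ ![stdBasis4 m, stdBasis4 l]) := by
  rw [expandL]
  refine Finset.sum_congr rfl fun m _ => ?_
  rw [expandR, Finset.mul_sum]

lemma swap2 (θ : (Fin 4 → ℝ) [⋀^Fin 2]→ₗ[ℝ] ℝ) (x y : Fin 4 → ℝ) :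
    θ ![y, x] = - θ ![x, y] := by
  have h := θ.map_swap ![x, y] (i := 0) (j := 1) (by decide)
  have h2 : (![x, y] ∘ Equiv.swap (0 : Fin 2) 1) = ![y, x] := by
    funext i; fin_cases i <;> rfl
  rw [h2] at h; exact h

lemma diag2 (θ : (Fin 4 → ℝ) [⋀^Fin 2]→ₗ[ℝ] ℝ) (x : Fin 4 → ℝ) :
    θ ![x, x] = 0 :=
  θ.map_eq_zero_of_eq ![x, x] (i := 0) (j := 1) rfl (by decide)

theorem keyLemma (p1 q1 r1 p2 q2 r2 p3 q3 r3 : ℝ)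
    (a10 a11 a12 a13 a20 a21 a22 a23 a30 a31 a32 a33 : ℝ)
    (hd : (p1*(q2*r3 - q3*r2) - q1*(p2*r3 - p3*r2) + r1*(p2*q3 - p3*q2)) ≠ 0)
    (h120 : -(p2*a11) - q2*a12 - r2*a13 = -(p1*a21) - q1*a22 - r1*a23)
    (h121 : p2*a10 + q2*a13 - r2*a12 = p1*a20 + q1*a23 - r1*a22)
    (h122 : -(p2*a13) + q2*a10 + r2*a11 = -(p1*a23) + q1*a20 + r1*a21)
    (h123 : p2*a12 - q2*a11 + r2*a10 = p1*a22 - q1*a21 + r1*a20)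
    (h130 : -(p3*a11) - q3*a12 - r3*a13 = -(p1*a31) - q1*a32 - r1*a33)
    (h131 : p3*a10 + q3*a13 - r3*a12 = p1*a30 + q1*a33 - r1*a32)
    (h132 : -(p3*a13) + q3*a10 + r3*a11 = -(p1*a33) + q1*a30 + r1*a31)
    (h133 : p3*a12 - q3*a11 + r3*a10 = p1*a32 - q1*a31 + r1*a30)
    (h230 : -(p3*a21) - q3*a22 - r3*a23 = -(p2*a31) - q2*a32 - r2*a33)
    (h231 : p3*a20 + q3*a23 - r3*a22 = p2*a30 + q2*a33 - r2*a32)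
    (h232 : -(p3*a23) + q3*a20 + r3*a21 = -(p2*a33) + q2*a30 + r2*a31)
    (h233 : p3*a22 - q3*a21 + r3*a20 = p2*a32 - q2*a31 + r2*a30)
    : a10 = 0 ∧ a11 = 0 ∧ a12 = 0 ∧ a13 = 0 ∧ a20 = 0 ∧ a21 = 0 ∧ a22 = 0 ∧ a23 = 0 ∧ a30 = 0 ∧ a31 = 0 ∧ a32 = 0 ∧ a33 = 0 := by
  have h2 : (2:ℝ) * (p1*(q2*r3 - q3*r2) - q1*(p2*r3 - p3*r2) + r1*(p2*q3 - p3*q2)) ≠ 0 := by intro h; exact hd (by linarith)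
  have h2n : (-2:ℝ) * (p1*(q2*r3 - q3*r2) - q1*(p2*r3 - p3*r2) + r1*(p2*q3 - p3*q2)) ≠ 0 := by intro h; exact hd (by linarith)
  have solve : ∀ c v : ℝ, c ≠ 0 → c * v = 0 → v = 0 := by
    intro c v hc h
    rcases mul_eq_zero.mp h with h | h
    · exact absurd h hc
    · exact h
  have ka10 : (2:ℝ) * (p1*(q2*r3 - q3*r2) - q1*(p2*r3 - p3*r2) + r1*(p2*q3 - p3*q2)) * a10 = 0 := by
    linear_combination (p1*p3 + q1*q3 + r1*r3) * h120 + ((-1)*q1*r3 + q3*r1) * h121 + (p1*r3 + (-1)*p3*r1) * h122 + ((-1)*p1*q3 + p3*q1) * h123 + (p1*p1 + q1*q1 + r1*r1) * h230 + (0) * h231 + (0) * h232 + (0) * h233 + ((-1)*p1*p2 + (-1)*q1*q2 + (-1)*r1*r2) * h130 + (q1*r2 + (-1)*q2*r1) * h131 + ((-1)*p1*r2 + p2*r1) * h132 + (p1*q2 + (-1)*p2*q1) * h133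
  have ka11 : (2:ℝ) * (p1*(q2*r3 - q3*r2) - q1*(p2*r3 - p3*r2) + r1*(p2*q3 - p3*q2)) * a11 = 0 := by
    linear_combination (q1*r3 + (-1)*q3*r1) * h120 + (p1*p3 + q1*q3 + r1*r3) * h121 + ((-1)*p1*q3 + p3*q1) * h122 + ((-1)*p1*r3 + p3*r1) * h123 + (0) * h230 + (p1*p1 + q1*q1 + r1*r1) * h231 + (0) * h232 + (0) * h233 + ((-1)*q1*r2 + q2*r1) * h130 + ((-1)*p1*p2 + (-1)*q1*q2 + (-1)*r1*r2) * h131 + (p1*q2 + (-1)*p2*q1) * h132 + (p1*r2 + (-1)*p2*r1) * h133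
  have ka12 : (2:ℝ) * (p1*(q2*r3 - q3*r2) - q1*(p2*r3 - p3*r2) + r1*(p2*q3 - p3*q2)) * a12 = 0 := by
    linear_combination ((-1)*p1*r3 + p3*r1) * h120 + (p1*q3 + (-1)*p3*q1) * h121 + (p1*p3 + q1*q3 + r1*r3) * h122 + ((-1)*q1*r3 + q3*r1) * h123 + (0) * h230 + (0) * h231 + (p1*p1 + q1*q1 + r1*r1) * h232 + (0) * h233 + (p1*r2 + (-1)*p2*r1) * h130 + ((-1)*p1*q2 + p2*q1) * h131 + ((-1)*p1*p2 + (-1)*q1*q2 + (-1)*r1*r2) * h132 + (q1*r2 + (-1)*q2*r1) * h133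
  have ka13 : (2:ℝ) * (p1*(q2*r3 - q3*r2) - q1*(p2*r3 - p3*r2) + r1*(p2*q3 - p3*q2)) * a13 = 0 := by
    linear_combination (p1*q3 + (-1)*p3*q1) * h120 + (p1*r3 + (-1)*p3*r1) * h121 + (q1*r3 + (-1)*q3*r1) * h122 + (p1*p3 + q1*q3 + r1*r3) * h123 + (0) * h230 + (0) * h231 + (0) * h232 + (p1*p1 + q1*q1 + r1*r1) * h233 + ((-1)*p1*q2 + p2*q1) * h130 + ((-1)*p1*r2 + p2*r1) * h131 + ((-1)*q1*r2 + q2*r1) * h132 + ((-1)*p1*p2 + (-1)*q1*q2 + (-1)*r1*r2) * h133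
  have ka20 : (-2:ℝ) * (p1*(q2*r3 - q3*r2) - q1*(p2*r3 - p3*r2) + r1*(p2*q3 - p3*q2)) * a20 = 0 := by
    linear_combination ((-1)*p2*p3 + (-1)*q2*q3 + (-1)*r2*r3) * h120 + (q2*r3 + (-1)*q3*r2) * h121 + ((-1)*p2*r3 + p3*r2) * h122 + (p2*q3 + (-1)*p3*q2) * h123 + (p2*p2 + q2*q2 + r2*r2) * h130 + (0) * h131 + (0) * h132 + (0) * h133 + ((-1)*p1*p2 + (-1)*q1*q2 + (-1)*r1*r2) * h230 + ((-1)*q1*r2 + q2*r1) * h231 + (p1*r2 + (-1)*p2*r1) * h232 + ((-1)*p1*q2 + p2*q1) * h233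
  have ka21 : (-2:ℝ) * (p1*(q2*r3 - q3*r2) - q1*(p2*r3 - p3*r2) + r1*(p2*q3 - p3*q2)) * a21 = 0 := by
    linear_combination ((-1)*q2*r3 + q3*r2) * h120 + ((-1)*p2*p3 + (-1)*q2*q3 + (-1)*r2*r3) * h121 + (p2*q3 + (-1)*p3*q2) * h122 + (p2*r3 + (-1)*p3*r2) * h123 + (0) * h130 + (p2*p2 + q2*q2 + r2*r2) * h131 + (0) * h132 + (0) * h133 + (q1*r2 + (-1)*q2*r1) * h230 + ((-1)*p1*p2 + (-1)*q1*q2 + (-1)*r1*r2) * h231 + ((-1)*p1*q2 + p2*q1) * h232 + ((-1)*p1*r2 + p2*r1) * h233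
  have ka22 : (-2:ℝ) * (p1*(q2*r3 - q3*r2) - q1*(p2*r3 - p3*r2) + r1*(p2*q3 - p3*q2)) * a22 = 0 := by
    linear_combination (p2*r3 + (-1)*p3*r2) * h120 + ((-1)*p2*q3 + p3*q2) * h121 + ((-1)*p2*p3 + (-1)*q2*q3 + (-1)*r2*r3) * h122 + (q2*r3 + (-1)*q3*r2) * h123 + (0) * h130 + (0) * h131 + (p2*p2 + q2*q2 + r2*r2) * h132 + (0) * h133 + ((-1)*p1*r2 + p2*r1) * h230 + (p1*q2 + (-1)*p2*q1) * h231 + ((-1)*p1*p2 + (-1)*q1*q2 + (-1)*r1*r2) * h232 + ((-1)*q1*r2 + q2*r1) * h233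
  have ka23 : (-2:ℝ) * (p1*(q2*r3 - q3*r2) - q1*(p2*r3 - p3*r2) + r1*(p2*q3 - p3*q2)) * a23 = 0 := by
    linear_combination ((-1)*p2*q3 + p3*q2) * h120 + ((-1)*p2*r3 + p3*r2) * h121 + ((-1)*q2*r3 + q3*r2) * h122 + ((-1)*p2*p3 + (-1)*q2*q3 + (-1)*r2*r3) * h123 + (0) * h130 + (0) * h131 + (0) * h132 + (p2*p2 + q2*q2 + r2*r2) * h133 + (p1*q2 + (-1)*p2*q1) * h230 + (p1*r2 + (-1)*p2*r1) * h231 + (q1*r2 + (-1)*q2*r1) * h232 + ((-1)*p1*p2 + (-1)*q1*q2 + (-1)*r1*r2) * h233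
  have ka30 : (-2:ℝ) * (p1*(q2*r3 - q3*r2) - q1*(p2*r3 - p3*r2) + r1*(p2*q3 - p3*q2)) * a30 = 0 := by
    linear_combination ((-1)*p1*p3 + (-1)*q1*q3 + (-1)*r1*r3) * h230 + ((-1)*q1*r3 + q3*r1) * h231 + (p1*r3 + (-1)*p3*r1) * h232 + ((-1)*p1*q3 + p3*q1) * h233 + ((-1)*p3*p3 + (-1)*q3*q3 + (-1)*r3*r3) * h120 + (0) * h121 + (0) * h122 + (0) * h123 + (p2*p3 + q2*q3 + r2*r3) * h130 + (q2*r3 + (-1)*q3*r2) * h131 + ((-1)*p2*r3 + p3*r2) * h132 + (p2*q3 + (-1)*p3*q2) * h133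
  have ka31 : (-2:ℝ) * (p1*(q2*r3 - q3*r2) - q1*(p2*r3 - p3*r2) + r1*(p2*q3 - p3*q2)) * a31 = 0 := by
    linear_combination (q1*r3 + (-1)*q3*r1) * h230 + ((-1)*p1*p3 + (-1)*q1*q3 + (-1)*r1*r3) * h231 + ((-1)*p1*q3 + p3*q1) * h232 + ((-1)*p1*r3 + p3*r1) * h233 + (0) * h120 + ((-1)*p3*p3 + (-1)*q3*q3 + (-1)*r3*r3) * h121 + (0) * h122 + (0) * h123 + ((-1)*q2*r3 + q3*r2) * h130 + (p2*p3 + q2*q3 + r2*r3) * h131 + (p2*q3 + (-1)*p3*q2) * h132 + (p2*r3 + (-1)*p3*r2) * h133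
  have ka32 : (-2:ℝ) * (p1*(q2*r3 - q3*r2) - q1*(p2*r3 - p3*r2) + r1*(p2*q3 - p3*q2)) * a32 = 0 := by
    linear_combination ((-1)*p1*r3 + p3*r1) * h230 + (p1*q3 + (-1)*p3*q1) * h231 + ((-1)*p1*p3 + (-1)*q1*q3 + (-1)*r1*r3) * h232 + ((-1)*q1*r3 + q3*r1) * h233 + (0) * h120 + (0) * h121 + ((-1)*p3*p3 + (-1)*q3*q3 + (-1)*r3*r3) * h122 + (0) * h123 + (p2*r3 + (-1)*p3*r2) * h130 + ((-1)*p2*q3 + p3*q2) * h131 + (p2*p3 + q2*q3 + r2*r3) * h132 + (q2*r3 + (-1)*q3*r2) * h133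
  have ka33 : (-2:ℝ) * (p1*(q2*r3 - q3*r2) - q1*(p2*r3 - p3*r2) + r1*(p2*q3 - p3*q2)) * a33 = 0 := by
    linear_combination (p1*q3 + (-1)*p3*q1) * h230 + (p1*r3 + (-1)*p3*r1) * h231 + (q1*r3 + (-1)*q3*r1) * h232 + ((-1)*p1*p3 + (-1)*q1*q3 + (-1)*r1*r3) * h233 + (0) * h120 + (0) * h121 + (0) * h122 + ((-1)*p3*p3 + (-1)*q3*q3 + (-1)*r3*r3) * h123 + ((-1)*p2*q3 + p3*q2) * h130 + ((-1)*p2*r3 + p3*r2) * h131 + ((-1)*q2*r3 + q3*r2) * h132 + (p2*p3 + q2*q3 + r2*r3) * h133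
  exact ⟨solve _ _ h2 ka10, solve _ _ h2 ka11, solve _ _ h2 ka12, solve _ _ h2 ka13, solve _ _ h2n ka20, solve _ _ h2n ka21, solve _ _ h2n ka22, solve _ _ h2n ka23, solve _ _ h2n ka30, solve _ _ h2n ka31, solve _ _ h2n ka32, solve _ _ h2n ka33⟩
/-- If θ₁, θ₂, θ₃ is a basis of the self-dual 2-forms and A₁, A₂, A₃ are vectors
with `ι_{A_i} θ_j = ι_{A_j} θ_i` for all i, j, then all the `A_i` vanish. -/
theorem selfDual_basis_contraction_symm
    (θ : Fin 3 → (Fin 4 → ℝ) [⋀^Fin 2]→ₗ[ℝ] ℝ)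
    (hsd : ∀ i, IsSelfDual (θ i))
    (hli : LinearIndependent ℝ θ)
    (A : Fin 3 → (Fin 4 → ℝ))
    (hsym : ∀ i j, ∀ v : Fin 4 → ℝ, θ j ![A i, v] = θ i ![A j, v]) :
    ∀ i, A i = 0 := by
  obtain ⟨p, hp⟩ : ∃ p : Fin 3 → ℝ, ∀ k, θ k ![stdBasis4 0, stdBasis4 1] = p k :=
    ⟨_, fun k => rfl⟩
  obtain ⟨q, hq⟩ : ∃ q : Fin 3 → ℝ, ∀ k, θ k ![stdBasis4 0, stdBasis4 2] = q k :=
    ⟨_, fun k => rfl⟩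
  obtain ⟨r, hr⟩ : ∃ r : Fin 3 → ℝ, ∀ k, θ k ![stdBasis4 0, stdBasis4 3] = r k :=
    ⟨_, fun k => rfl⟩
  have t01 : ∀ k, θ k ![stdBasis4 0, stdBasis4 1] = p k := hp
  have t02 : ∀ k, θ k ![stdBasis4 0, stdBasis4 2] = q k := hq
  have t03 : ∀ k, θ k ![stdBasis4 0, stdBasis4 3] = r k := hr
  have t10 : ∀ k, θ k ![stdBasis4 1, stdBasis4 0] = -p k := fun k => by rw [swap2, hp]
  have t20 : ∀ k, θ k ![stdBasis4 2, stdBasis4 0] = -q k := fun k => by rw [swap2, hq]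
  have t30 : ∀ k, θ k ![stdBasis4 3, stdBasis4 0] = -r k := fun k => by rw [swap2, hr]
  have t23 : ∀ k, θ k ![stdBasis4 2, stdBasis4 3] = p k := fun k => by rw [← (hsd k).1, hp]
  have t32 : ∀ k, θ k ![stdBasis4 3, stdBasis4 2] = -p k := fun k => by rw [swap2, t23]
  have t31 : ∀ k, θ k ![stdBasis4 3, stdBasis4 1] = q k := fun k => by rw [← (hsd k).2.1, hq]
  have t13 : ∀ k, θ k ![stdBasis4 1, stdBasis4 3] = -q k := fun k => by rw [swap2, t31]
  have t12 : ∀ k, θ k ![stdBasis4 1, stdBasis4 2] = r k := fun k => by rw [← (hsd k).2.2, hr]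
  have t21 : ∀ k, θ k ![stdBasis4 2, stdBasis4 1] = -r k := fun k => by rw [swap2, t12]
  have t00 : ∀ k, θ k ![stdBasis4 0, stdBasis4 0] = 0 := fun k => diag2 _ _
  have t11 : ∀ k, θ k ![stdBasis4 1, stdBasis4 1] = 0 := fun k => diag2 _ _
  have t22 : ∀ k, θ k ![stdBasis4 2, stdBasis4 2] = 0 := fun k => diag2 _ _
  have t33 : ∀ k, θ k ![stdBasis4 3, stdBasis4 3] = 0 := fun k => diag2 _ _
  have hd : p 0 * (q 1 * r 2 - q 2 * r 1) - q 0 * (p 1 * r 2 - p 2 * r 1)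
      + r 0 * (p 1 * q 2 - p 2 * q 1) ≠ 0 := by
    intro h0
    have hdet0 : (Matrix.of ![![p 0, q 0, r 0], ![p 1, q 1, r 1], ![p 2, q 2, r 2]]).det = 0 := by
      rw [Matrix.det_fin_three]
      simp only [Matrix.of_apply, Matrix.cons_val', Matrix.cons_val_zero, Matrix.cons_val_one,
        Matrix.head_cons, Matrix.empty_val', Matrix.cons_val_fin_one, Matrix.head_fin_const,
        Matrix.cons_val_two, Matrix.tail_cons]
      linear_combination h0
    obtain ⟨c, hc0, hcM⟩ := Matrix.exists_vecMul_eq_zero_iff.mpr hdet0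
    have hP : c 0 * p 0 + c 1 * p 1 + c 2 * p 2 = 0 := by
      have := congrFun hcM 0
      simpa [Matrix.vecMul, dotProduct, Fin.sum_univ_three] using this
    have hQ : c 0 * q 0 + c 1 * q 1 + c 2 * q 2 = 0 := by
      have := congrFun hcM 1
      simpa [Matrix.vecMul, dotProduct, Fin.sum_univ_three] using this
    have hR : c 0 * r 0 + c 1 * r 1 + c 2 * r 2 = 0 := by
      have := congrFun hcM 2
      simpa [Matrix.vecMul, dotProduct, Fin.sum_univ_three] using this
    have hsum : ∑ k : Fin 3, c k • θ k = 0 := by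
      ext x
      have hx : x = ![x 0, x 1] := by
        funext i; fin_cases i <;> rfl
      rw [hx]
      simp only [Fin.sum_univ_three, AlternatingMap.zero_apply, AlternatingMap.add_apply,
        AlternatingMap.smul_apply, smul_eq_mul]
      rw [expand2 (θ 0), expand2 (θ 1), expand2 (θ 2)]
      simp only [Fin.sum_univ_four, t00, t01, t02, t03, t10, t11, t12, t13,
        t20, t21, t22, t23, t30, t31, t32, t33]
      linear_combination (x 0 0 * x 1 1 - x 0 1 * x 1 0 + x 0 2 * x 1 3 - x 0 3 * x 1 2) * hP
        + (x 0 0 * x 1 2 - x 0 2 * x 1 0 + x 0 3 * x 1 1 - x 0 1 * x 1 3) * hQ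
        + (x 0 0 * x 1 3 - x 0 3 * x 1 0 + x 0 1 * x 1 2 - x 0 2 * x 1 1) * hR
    have hall := Fintype.linearIndependent_iff.mp hli c hsum
    exact hc0 (funext hall)
  have h120 := hsym 0 1 (stdBasis4 0)
  rw [expandL (θ 1), expandL (θ 0)] at h120
  have h121 := hsym 0 1 (stdBasis4 1)
  rw [expandL (θ 1), expandL (θ 0)] at h121
  have h122 := hsym 0 1 (stdBasis4 2)
  rw [expandL (θ 1), expandL (θ 0)] at h122
  have h123 := hsym 0 1 (stdBasis4 3)
  rw [expandL (θ 1), expandL (θ 0)] at h123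
  have h130 := hsym 0 2 (stdBasis4 0)
  rw [expandL (θ 2), expandL (θ 0)] at h130
  have h131 := hsym 0 2 (stdBasis4 1)
  rw [expandL (θ 2), expandL (θ 0)] at h131
  have h132 := hsym 0 2 (stdBasis4 2)
  rw [expandL (θ 2), expandL (θ 0)] at h132
  have h133 := hsym 0 2 (stdBasis4 3)
  rw [expandL (θ 2), expandL (θ 0)] at h133
  have h230 := hsym 1 2 (stdBasis4 0)
  rw [expandL (θ 2), expandL (θ 1)] at h230
  have h231 := hsym 1 2 (stdBasis4 1)
  rw [expandL (θ 2), expandL (θ 1)] at h231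
  have h232 := hsym 1 2 (stdBasis4 2)
  rw [expandL (θ 2), expandL (θ 1)] at h232
  have h233 := hsym 1 2 (stdBasis4 3)
  rw [expandL (θ 2), expandL (θ 1)] at h233
  simp only [Fin.sum_univ_four, t00, t01, t02, t03, t10, t11, t12, t13,
    t20, t21, t22, t23, t30, t31, t32, t33] at h120 h121 h122 h123 h130 h131 h132 h133 h230 h231 h232 h233
  obtain ⟨e10, e11, e12, e13, e20, e21, e22, e23, e30, e31, e32, e33⟩ :=
    keyLemma (p 0) (q 0) (r 0) (p 1) (q 1) (r 1) (p 2) (q 2) (r 2)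
      (A 0 0) (A 0 1) (A 0 2) (A 0 3) (A 1 0) (A 1 1) (A 1 2) (A 1 3)
      (A 2 0) (A 2 1) (A 2 2) (A 2 3) hd
      (by linear_combination h120)
      (by linear_combination h121)
      (by linear_combination h122)
      (by linear_combination h123)
      (by linear_combination h130)
      (by linear_combination h131)
      (by linear_combination h132)
      (by linear_combination h133)
      (by linear_combination h230)
      (by linear_combination h231)
      (by linear_combination h232)
      (by linear_combination h233)
  intro i
  fin_cases i
  · funext m; fin_cases m
    exacts [e10, e11, e12, e13]
  · funext m; fin_cases m
    exacts [e20, e21, e22, e23]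
  · funext m; fin_cases m
    exacts [e30, e31, e32, e33]
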